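/- arXiv:1806.01934 — 3 statements merged into one kernel-verified Lean document; each statement's English description precedes it below -/
import Mathlib

section
/- Fix a > 0 and V_R < V_F with V_F ≤ 0, and take b0 = 0. If b > V_F - V_R, then there exists no steady state (rho_inf, N_inf) of the NNLIF system with connectivity b. -/
open Real Set Filter MeasureTheory Topology

/-- A steady state of the NNLIF system (with `b0 = 0`), with `rho'`, `rho''`
playing the role of the first and second derivatives of the profile `rho`,
and `limm`, `limp` the one-sided limits of `rho'` at `V_R`. -/
structure NNLIFSteadyState (a b VR VF : ℝ) where
  rho : ℝ → ℝ
  Ninf : ℝ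
  rho' : ℝ → ℝ
  rho'' : ℝ → ℝ
  limm : ℝ
  limp : ℝ
  Ninf_pos : 0 < Ninf
  rho_nonneg : ∀ v ≤ VF, 0 ≤ rho v
  rho_cont : ContinuousOn rho (Iic VF)
  rho_int : IntegrableOn rho (Iic VF)
  rho_mass : (∫ v in Iic VF, rho v) = 1
  rho'_def : ∀ v ∈ Iio VR ∪ Ioo VR VF, HasDerivWithinAt rho (rho' v) (Iic VF) v
  rho''_def : ∀ v ∈ Iio VR ∪ Ioo VR VF, HasDerivWithinAt rho' (rho'' v) (Iic VF) v
  rho'_cont : ContinuousOn rho' (Iio VR ∪ Ioo VR VF)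
  rho''_cont : ContinuousOn rho'' (Iio VR ∪ Ioo VR VF)
  rho_VF : rho VF = 0
  rho_bot : Tendsto rho atBot (nhds 0)
  vrho_bot : Tendsto (fun v => v * rho v) atBot (nhds 0)
  rho'_bot : Tendsto rho' atBot (nhds 0)
  vrho'_bot : Tendsto (fun v => v * rho' v) atBot (nhds 0)
  vrho_int : IntegrableOn (fun v => v * rho v) (Iic VF)
  limm_def : Tendsto rho' (nhdsWithin VR (Iio VR)) (nhds limm)
  limp_def : Tendsto rho' (nhdsWithin VR (Ioi VR)) (nhds limp)
  rho'_VF : HasDerivWithinAt rho (rho' VF) (Iic VF) VF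
  Ninf_def : Ninf = -a * rho' VF
  ode : ∀ v ∈ Iio VR ∪ Ioo VR VF, -(rho v) + (-v + b * Ninf) * rho' v = a * rho'' v
  jump : a * (limm - limp) = Ninf

/-- if `b > V_F - V_R` and `V_F ≤ 0` (with `b0 = 0`), there is no
steady state of the NNLIF system with connectivity `b`. -/
theorem stmt13 (a b VR VF : ℝ) (ha : 0 < a) (hV : VR < VF) (hVF : VF ≤ 0)
    (hb : VF - VR < b) :
    IsEmpty (NNLIFSteadyState a b VR VF) := by
  constructor
  intro S
  set N := S.Ninf with hNdef
  have hNpos : 0 < N := S.Ninf_pos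
  set g : ℝ → ℝ := fun v => a * S.rho' v - (-v + b * N) * S.rho v with hgdef
  set φ : ℝ → ℝ := fun v => (-v + b * N) * S.rho v with hφdef
  -- g has zero derivative on the open set
  have hderivg : ∀ v ∈ Iio VR ∪ Ioo VR VF, HasDerivAt g 0 v := by
    intro v hv
    have hvVF : v < VF := by rcases hv with h | h; exacts [h.out.trans hV, h.2]
    have hmem : Iic VF ∈ 𝓝 v := Iic_mem_nhds hvVF
    have h1 : HasDerivAt S.rho (S.rho' v) v := (S.rho'_def v hv).hasDerivAt hmem
    have h2 : HasDerivAt S.rho' (S.rho'' v) v := (S.rho''_def v hv).hasDerivAt hmem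
    have hlin : HasDerivAt (fun w : ℝ => -w + b * N) (-1) v := by
      simpa using (hasDerivAt_id v).neg.add_const (b * N)
    have h3 : HasDerivAt g (a * S.rho'' v - ((-1) * S.rho v + (-v + b * N) * S.rho' v)) v :=
      (h2.const_mul a).sub (hlin.mul h1)
    have heq := S.ode v hv
    have : a * S.rho'' v - ((-1) * S.rho v + (-v + b * N) * S.rho' v) = 0 := by
      rw [← heq]; ring
    rwa [this] at h3
  -- g is constant on convex subsets of the open set
  have hconst : ∀ s : Set ℝ, Convex ℝ s → s ⊆ Iio VR ∪ Ioo VR VF →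
      ∀ x ∈ s, ∀ y ∈ s, g x = g y := by
    intro s hs hsub x hx y hy
    have hbd := hs.norm_image_sub_le_of_norm_hasDerivWithin_le
      (f := g) (f' := fun _ => (0 : ℝ))
      (fun z hz => (hderivg z (hsub hz)).hasDerivWithinAt)
      (fun z _ => norm_zero.le) hy hx
    rw [zero_mul] at hbd
    have := norm_le_zero_iff.mp hbd
    have := sub_eq_zero.mp this
    linarith
  -- g tends to 0 at -∞
  have hgbot : Tendsto g atBot (𝓝 0) := by
    have h1 : Tendsto (fun v => a * S.rho' v + v * S.rho v - b * N * S.rho v) atBot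
        (𝓝 (a * 0 + 0 - b * N * 0)) :=
      ((S.rho'_bot.const_mul a).add S.vrho_bot).sub (S.rho_bot.const_mul (b * N))
    have h2 : (fun v => a * S.rho' v + v * S.rho v - b * N * S.rho v) = g := by
      funext v; simp only [hgdef]; ring
    rw [h2] at h1
    simpa using h1
  -- g = 0 on Iio VR
  have hg0 : ∀ v < VR, g v = 0 := by
    intro v hv
    have hev : g =ᶠ[atBot] fun _ => g v := by
      filter_upwards [eventually_lt_atBot VR] with x hx
      exact hconst (Iio VR) (convex_Iio VR) subset_union_left x hx v hv
    exact tendsto_nhds_unique tendsto_const_nhds (hgbot.congr' hev)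
  -- continuity facts at VR
  have hρVR : Tendsto S.rho (𝓝[Iic VF] VR) (𝓝 (S.rho VR)) := S.rho_cont VR hV.le
  have hlinVR : Tendsto (fun v : ℝ => -v + b * N) (𝓝 VR) (𝓝 (-VR + b * N)) := by
    exact ((continuous_neg.add continuous_const).tendsto VR)
  -- left limit identity
  have hleft : (0 : ℝ) = a * S.limm - (-VR + b * N) * S.rho VR := by
    have htl : Tendsto g (𝓝[Iio VR] VR) (𝓝 (a * S.limm - (-VR + b * N) * S.rho VR)) := by
      refine Tendsto.sub (S.limm_def.const_mul a) (Tendsto.mul ?_ ?_)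
      · exact hlinVR.mono_left nhdsWithin_le_nhds
      · exact hρVR.mono_left (nhdsWithin_mono VR (fun x hx => le_of_lt (hx.out.trans hV)))
    have hevl : g =ᶠ[𝓝[Iio VR] VR] fun _ => (0 : ℝ) := by
      filter_upwards [self_mem_nhdsWithin] with x hx
      exact hg0 x hx
    exact tendsto_nhds_unique tendsto_const_nhds (htl.congr' hevl)
  -- g = -N on Ioo VR VF
  have hne : (𝓝[Ioo VR VF] VR).NeBot := by
    refine mem_closure_iff_nhdsWithin_neBot.mp ?_
    rw [closure_Ioo hV.ne]
    exact ⟨le_refl VR, hV.le⟩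
  have hgc : ∀ v ∈ Ioo VR VF, g v = -N := by
    intro v hv
    have htr : Tendsto g (𝓝[Ioo VR VF] VR) (𝓝 (a * S.limp - (-VR + b * N) * S.rho VR)) := by
      refine Tendsto.sub ?_ (Tendsto.mul ?_ ?_)
      · exact (S.limp_def.mono_left (nhdsWithin_mono VR Ioo_subset_Ioi_self)).const_mul a
      · exact hlinVR.mono_left nhdsWithin_le_nhds
      · exact hρVR.mono_left (nhdsWithin_mono VR (fun x hx => le_of_lt hx.2))
    have hev : g =ᶠ[𝓝[Ioo VR VF] VR] fun _ => g v := by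
      filter_upwards [self_mem_nhdsWithin] with x hx
      exact hconst (Ioo VR VF) (convex_Ioo VR VF) subset_union_right x hx v hv
    have := tendsto_nhds_unique tendsto_const_nhds (htr.congr' hev)
    have hjump := S.jump
    rw [this]
    linarith
  -- integrability of φ
  have hφint : IntegrableOn φ (Iic VF) := by
    have h1 : IntegrableOn (fun v => -(v * S.rho v) + b * N * S.rho v) (Iic VF) :=
      S.vrho_int.neg.add (S.rho_int.const_mul (b * N))
    have h2 : (fun v => -(v * S.rho v) + b * N * S.rho v) = φ := by
      funext v; simp only [hφdef]; ring
    rwa [h2] at h1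
  -- left FTC
  have hresL : volume.restrict (Iio VR) = volume.restrict (Iic VR) :=
    Measure.restrict_congr_set Iio_ae_eq_Iic
  have hρ'eqL : ∀ v ∈ Iio VR, S.rho' v = φ v / a := by
    intro v hv
    have := hg0 v hv
    simp only [hgdef, hφdef] at this ⊢
    field_simp
    linarith
  have hφintL : IntegrableOn (fun v => φ v / a) (Iic VR) :=
    (hφint.mono_set (Iic_subset_Iic.mpr hV.le)).div_const a
  have hρ'intL : IntegrableOn S.rho' (Iic VR) := by
    have h1 : IntegrableOn (fun v => φ v / a) (Iio VR) := by
      unfold IntegrableOn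
      rw [hresL]; exact hφintL
    have h2 : IntegrableOn S.rho' (Iio VR) := by
      refine h1.congr ?_
      rw [EventuallyEq, ae_restrict_iff' measurableSet_Iio]
      exact ae_of_all _ fun v hv => (hρ'eqL v hv).symm
    unfold IntegrableOn
    rw [← hresL]; exact h2
  have hFTC1 : ∫ v in Iic VR, S.rho' v = S.rho VR - 0 := by
    refine integral_Iic_of_hasDerivAt_of_tendsto ?_ ?_ hρ'intL S.rho_bot
    · exact (S.rho_cont VR hV.le).mono (Iic_subset_Iic.mpr hV.le)
    · intro x hx
      exact (S.rho'_def x (Or.inl hx)).hasDerivAt (Iic_mem_nhds (hx.out.trans hV))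
  have hintφL : ∫ v in Iic VR, φ v = a * S.rho VR := by
    have h1 : ∫ v in Iic VR, S.rho' v = ∫ v in Iio VR, S.rho' v := by
      rw [hresL]
    have h2 : ∫ v in Iio VR, S.rho' v = ∫ v in Iio VR, φ v / a := by
      refine setIntegral_congr_fun measurableSet_Iio fun v hv => hρ'eqL v hv
    have h3 : ∫ v in Iio VR, φ v / a = (∫ v in Iio VR, φ v) / a := integral_div a _
    have h4 : ∫ v in Iio VR, φ v = ∫ v in Iic VR, φ v := by rw [hresL]
    have := hFTC1
    rw [h1, h2, h3, h4] at this
    field_simp at this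
    linarith
  -- right FTC
  have hresR : volume.restrict (Ioo VR VF) = volume.restrict (Ioc VR VF) :=
    Measure.restrict_congr_set Ioo_ae_eq_Ioc
  have hρ'eqR : ∀ v ∈ Ioo VR VF, S.rho' v = (φ v - N) / a := by
    intro v hv
    have := hgc v hv
    simp only [hgdef, hφdef] at this ⊢
    field_simp
    linarith
  have hNint : IntegrableOn (fun _ : ℝ => N) (Ioc VR VF) := by
    exact (integrableOn_const_iff (C := N)).mpr (Or.inr measure_Ioc_lt_top)
  have hψint : IntegrableOn (fun v => (φ v - N) / a) (Ioc VR VF) :=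
    ((hφint.mono_set Ioc_subset_Iic_self).sub hNint).div_const a
  have hρ'intR : IntegrableOn S.rho' (Ioc VR VF) := by
    have h1 : IntegrableOn (fun v => (φ v - N) / a) (Ioo VR VF) := by
      unfold IntegrableOn; rw [hresR]; exact hψint
    have h2 : IntegrableOn S.rho' (Ioo VR VF) := by
      refine h1.congr ?_
      rw [EventuallyEq, ae_restrict_iff' measurableSet_Ioo]
      exact ae_of_all _ fun v hv => (hρ'eqR v hv).symm
    unfold IntegrableOn
    rw [← hresR]; exact h2
  have hFTC2 : ∫ v in VR..VF, S.rho' v = S.rho VF - S.rho VR := by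
    refine intervalIntegral.integral_eq_sub_of_hasDeriv_right_of_le hV.le
      (S.rho_cont.mono Icc_subset_Iic_self) ?_ ?_
    · intro x hx
      exact ((S.rho'_def x (Or.inr hx)).hasDerivAt (Iic_mem_nhds hx.2)).hasDerivWithinAt
    · exact (intervalIntegrable_iff_integrableOn_Ioc_of_le hV.le).mpr hρ'intR
  have hintφR : ∫ v in Ioc VR VF, φ v = N * (VF - VR) - a * S.rho VR := by
    have h1 : ∫ v in VR..VF, S.rho' v = ∫ v in Ioc VR VF, S.rho' v :=
      intervalIntegral.integral_of_le hV.le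
    have h2 : ∫ v in Ioc VR VF, S.rho' v = ∫ v in Ioo VR VF, S.rho' v := by rw [← hresR]
    have h3 : ∫ v in Ioo VR VF, S.rho' v = ∫ v in Ioo VR VF, (φ v - N) / a :=
      setIntegral_congr_fun measurableSet_Ioo fun v hv => hρ'eqR v hv
    have h4 : ∫ v in Ioo VR VF, (φ v - N) / a = ∫ v in Ioc VR VF, (φ v - N) / a := by
      rw [hresR]
    have h5 : ∫ v in Ioc VR VF, (φ v - N) / a
        = ((∫ v in Ioc VR VF, φ v) - N * (VF - VR)) / a := by
      rw [integral_div, integral_sub (hφint.mono_set Ioc_subset_Iic_self) hNint]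
      congr 1
      rw [setIntegral_const, Real.volume_real_Ioc_of_le hV.le, smul_eq_mul]
      ring
    have := hFTC2
    rw [h1, h2, h3, h4, h5, S.rho_VF] at this
    field_simp at this
    linarith
  -- combine
  have hsplit : ∫ v in Iic VF, φ v = (∫ v in Iic VR, φ v) + ∫ v in Ioc VR VF, φ v := by
    rw [← setIntegral_union (Iic_disjoint_Ioc le_rfl) measurableSet_Ioc
      (hφint.mono_set (Iic_subset_Iic.mpr hV.le)) (hφint.mono_set Ioc_subset_Iic_self),
      Iic_union_Ioc_eq_Iic hV.le]
  have htotal : ∫ v in Iic VF, φ v = N * (VF - VR) := by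
    rw [hsplit, hintφL, hintφR]; ring
  -- evaluate the total integral
  have hexp : ∫ v in Iic VF, φ v = -(∫ v in Iic VF, v * S.rho v) + b * N := by
    have h1 : ∫ v in Iic VF, φ v
        = ∫ v in Iic VF, (-(v * S.rho v) + b * N * S.rho v) := by
      refine setIntegral_congr_fun measurableSet_Iic fun v _ => by simp only [hφdef]; ring
    have h2 : (∫ v in Iic VF, (-(v * S.rho v) + b * N * S.rho v))
        = (∫ v in Iic VF, -(v * S.rho v)) + ∫ v in Iic VF, b * N * S.rho v :=
      integral_add S.vrho_int.neg (S.rho_int.const_mul (b * N))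
    rw [h1, h2, integral_neg, integral_const_mul, S.rho_mass, mul_one]
  have hvρ : ∫ v in Iic VF, v * S.rho v ≤ 0 := by
    refine setIntegral_nonpos measurableSet_Iic fun v hv => ?_
    exact mul_nonpos_iff.mpr (Or.inr ⟨le_trans hv hVF, S.rho_nonneg v hv⟩)
  have hfin : b * N ≤ N * (VF - VR) := by
    rw [← htotal, hexp]; linarith
  have : b ≤ VF - VR := by
    have := (mul_le_mul_iff_left₀ hNpos).mp (by linarith [hfin] : b * N ≤ (VF - VR) * N)
    exact this
  linarith
end

section
/- Fix a > 0, V_R < V_F and b0 = 0. Every steady state (rho_inf, N_inf) of the NNLIF system with connectivity b satisfies the first-moment identity ∫_{-infty}^{V_F} v rho_inf(v) dv = (b - (V_F - V_R)) N_inf. -/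
open Real Set Filter MeasureTheory Topology

/-- the first-moment identity for steady states of the NNLIF
system (with `b0 = 0`). -/
theorem stmt14 (a b VR VF : ℝ) (ha : 0 < a) (hV : VR < VF)
    (S : NNLIFSteadyState a b VR VF) :
    (∫ v in Iic VF, v * S.rho v) = (b - (VF - VR)) * S.Ninf := by
  set ρ := S.rho with hρ
  set ρ' := S.rho' with hρ'
  set N := S.Ninf with hN
  -- the flux
  set J : ℝ → ℝ := fun v => (-v + b * N) * ρ v - a * ρ' v with hJ
  -- J has zero derivative off VR
  have hJderiv : ∀ v ∈ Iio VR ∪ Ioo VR VF, HasDerivAt J 0 v := by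
    intro v hv
    have hvF : v < VF := by rcases hv with h | h; exacts [h.trans hV, h.2]
    have hmem : Iic VF ∈ 𝓝 v := Iic_mem_nhds hvF
    have h1 : HasDerivAt ρ (ρ' v) v := (S.rho'_def v hv).hasDerivAt hmem
    have h2 : HasDerivAt ρ' (S.rho'' v) v := (S.rho''_def v hv).hasDerivAt hmem
    have h3 : HasDerivAt (fun w : ℝ => -w + b * N) (-1) v := by
      simpa using ((hasDerivAt_id v).neg.add_const (b * N))
    have h4 := (h3.mul h1).sub (h2.const_mul a)
    have hode := S.ode v hv
    refine h4.congr_deriv ?_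
    change -(ρ v) + (-v + b * N) * ρ' v = a * S.rho'' v at hode
    linarith [hode]
  -- J is constant on convex subsets of the domain
  have hconst : ∀ s : Set ℝ, Convex ℝ s → s ⊆ Iio VR ∪ Ioo VR VF →
      ∀ x ∈ s, ∀ y ∈ s, J x = J y := by
    intro s hs hsub x hx y hy
    have := hs.norm_image_sub_le_of_norm_hasDerivWithin_le
      (f' := fun _ => (0 : ℝ)) (C := 0)
      (fun z hz => ((hJderiv z (hsub hz)).hasDerivWithinAt))
      (fun z _ => by simp) hx hy
    have : ‖J y - J x‖ ≤ 0 := by simpa using this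
    have : J y - J x = 0 := by
      have := norm_le_zero_iff.mp this
      exact this
    linarith [this]
  -- J tends to 0 at -infty
  have hJbot : Tendsto J atBot (nhds 0) := by
    have h1 : Tendsto (fun v => -(v * ρ v) + (b * N) * ρ v - a * ρ' v) atBot
        (nhds (-0 + (b * N) * 0 - a * 0)) :=
      ((S.vrho_bot.neg.add (S.rho_bot.const_mul (b * N))).sub (S.rho'_bot.const_mul a))
    have h2 : (fun v => -(v * ρ v) + (b * N) * ρ v - a * ρ' v) = J := by
      funext v; simp [hJ]; ring
    rw [h2] at h1
    simpa using h1
  -- J = 0 on Iio VR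
  have hJ0 : ∀ x ∈ Iio VR, J x = 0 := by
    intro x hx
    have hconst' : ∀ y ∈ Iio VR, J y = J x := fun y hy =>
      hconst (Iio VR) (convex_Iio VR) subset_union_left y hy x hx
    have hev : J =ᶠ[atBot] fun _ => J x := by
      filter_upwards [eventually_lt_atBot VR] with y hy using hconst' y hy
    have : Tendsto J atBot (nhds (J x)) := Tendsto.congr' hev.symm tendsto_const_nhds
    exact tendsto_nhds_unique this hJbot
  -- limit relation at VR from the left : (-VR + bN) ρ(VR) - a limm = 0
  have hρVR : Tendsto ρ (nhdsWithin VR (Iio VR)) (nhds (ρ VR)) := by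
    have : ContinuousWithinAt ρ (Iic VF) VR :=
      S.rho_cont.continuousWithinAt (mem_Iic.2 hV.le)
    exact this.tendsto.mono_left
      (nhdsWithin_mono _ (fun z hz => le_of_lt (lt_trans hz hV)))
  have hleft : (-VR + b * N) * ρ VR - a * S.limm = 0 := by
    have hJleft : Tendsto J (nhdsWithin VR (Iio VR))
        (nhds ((-VR + b * N) * ρ VR - a * S.limm)) := by
      have hc : Tendsto (fun v : ℝ => -v + b * N) (nhdsWithin VR (Iio VR))
          (nhds (-VR + b * N)) :=
        ((continuous_neg.add continuous_const).tendsto VR).mono_left nhdsWithin_le_nhds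
      exact (hc.mul hρVR).sub (S.limm_def.const_mul a)
    have hev : J =ᶠ[nhdsWithin VR (Iio VR)] fun _ => (0 : ℝ) := by
      filter_upwards [self_mem_nhdsWithin] with y hy using hJ0 y hy
    have h0 : Tendsto J (nhdsWithin VR (Iio VR)) (nhds 0) :=
      Tendsto.congr' hev.symm tendsto_const_nhds
    exact tendsto_nhds_unique hJleft h0
  -- J = N on Ioo VR VF
  have hmidNB : (nhdsWithin VR (Ioo VR VF)).NeBot := by
    rw [← mem_closure_iff_nhdsWithin_neBot, closure_Ioo hV.ne]
    exact ⟨le_refl VR, hV.le⟩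
  have hJN : ∀ x ∈ Ioo VR VF, J x = N := by
    intro x hx
    have hconst' : ∀ y ∈ Ioo VR VF, J y = J x := fun y hy =>
      hconst (Ioo VR VF) (convex_Ioo VR VF) subset_union_right y hy x hx
    have hJright : Tendsto J (nhdsWithin VR (Ioo VR VF))
        (nhds ((-VR + b * N) * ρ VR - a * S.limp)) := by
      have hc : Tendsto (fun v : ℝ => -v + b * N) (nhdsWithin VR (Ioo VR VF))
          (nhds (-VR + b * N)) :=
        ((continuous_neg.add continuous_const).tendsto VR).mono_left nhdsWithin_le_nhds
      have hρr : Tendsto ρ (nhdsWithin VR (Ioo VR VF)) (nhds (ρ VR)) := by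
        have : ContinuousWithinAt ρ (Iic VF) VR :=
          S.rho_cont.continuousWithinAt (mem_Iic.2 hV.le)
        exact this.tendsto.mono_left
          (nhdsWithin_mono _ (fun z hz => le_of_lt hz.2))
      have hlp : Tendsto ρ' (nhdsWithin VR (Ioo VR VF)) (nhds S.limp) :=
        S.limp_def.mono_left (nhdsWithin_mono _ (fun z hz => hz.1))
      exact (hc.mul hρr).sub (hlp.const_mul a)
    have hev : J =ᶠ[nhdsWithin VR (Ioo VR VF)] fun _ => J x := by
      filter_upwards [self_mem_nhdsWithin] with y hy using hconst' y hy
    have h1 : Tendsto J (nhdsWithin VR (Ioo VR VF)) (nhds (J x)) :=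
      Tendsto.congr' hev.symm tendsto_const_nhds
    have h2 : J x = (-VR + b * N) * ρ VR - a * S.limp :=
      tendsto_nhds_unique h1 hJright
    have hj := S.jump
    rw [← hN] at hj
    rw [h2]
    nlinarith [hleft, hj]
  -- the indicator function g
  set g : ℝ → ℝ := (Ioo VR VF).indicator (fun _ => N) with hg
  have hgint : IntegrableOn g (Iic VF) := by
    have : Integrable g := by
      rw [hg, integrable_indicator_iff measurableSet_Ioo]
      exact integrableOn_const measure_Ioo_lt_top.ne
    exact this.integrableOn
  have hgval : (∫ v in Iic VF, g v) = N * (VF - VR) := by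
    rw [hg, setIntegral_indicator measurableSet_Ioo]
    have : Iic VF ∩ Ioo VR VF = Ioo VR VF := by
      ext z; constructor
      · rintro ⟨_, hz⟩; exact hz
      · intro hz; exact ⟨le_of_lt hz.2, hz⟩
    rw [this, setIntegral_const, Real.volume_real_Ioo_of_le hV.le, smul_eq_mul]
    ring
  -- a.e. equality J = g on Iic VF
  have haeJ : ∀ᵐ v ∂(volume.restrict (Iic VF)), J v = g v := by
    have h1 : ∀ᵐ v ∂(volume.restrict (Iic VF)), v ∈ Iic VF :=
      ae_restrict_mem measurableSet_Iic
    have h2 : ∀ᵐ v ∂(volume.restrict (Iic VF)), v ∉ ({VR, VF} : Set ℝ) := by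
      refine ae_restrict_of_ae ?_
      have hz : volume ({VR, VF} : Set ℝ) = 0 :=
        measure_union_null volume_singleton volume_singleton
      exact measure_eq_zero_iff_ae_notMem.mp hz
    filter_upwards [h1, h2] with v hv1 hv2
    simp only [mem_insert_iff, mem_singleton_iff, not_or] at hv2
    have hvF : v < VF := lt_of_le_of_ne hv1 hv2.2
    rcases lt_or_gt_of_ne hv2.1 with h | h
    · have hnm : v ∉ Ioo VR VF := fun hc => absurd hc.1 (not_lt.2 h.le)
      rw [hJ0 v h, hg, indicator_of_notMem hnm]
    · rw [hJN v (mem_Ioo.mpr ⟨h, hvF⟩), hg, indicator_of_mem (mem_Ioo.mpr ⟨h, hvF⟩)]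
  -- the function (-v + bN) ρ v is integrable on Iic VF
  have hlin_int : IntegrableOn (fun v => (-v + b * N) * ρ v) (Iic VF) := by
    have h1 : IntegrableOn (fun v => -(v * ρ v) + (b * N) * ρ v) (Iic VF) :=
      S.vrho_int.neg.add (S.rho_int.const_mul (b * N))
    refine h1.congr_fun (fun v _ => by ring) measurableSet_Iic
  -- rho' is integrable on Iic VF, via J = g a.e.
  have haeρ' : ρ' =ᶠ[ae (volume.restrict (Iic VF))]
      fun v => ((-v + b * N) * ρ v - g v) * a⁻¹ := by
    filter_upwards [haeJ] with v hv
    have : (-v + b * N) * ρ v - a * ρ' v = g v := hv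
    field_simp
    linarith
  have hρ'int : IntegrableOn ρ' (Iic VF) := by
    have h1 : IntegrableOn (fun v => ((-v + b * N) * ρ v - g v) * a⁻¹) (Iic VF) :=
      (hlin_int.sub hgint).mul_const a⁻¹
    exact h1.congr haeρ'.symm
  -- FTC: the integral of rho' over Iic VF is 0
  have hρ'zero : (∫ v in Iic VF, ρ' v) = 0 := by
    have htend : Tendsto (fun M : ℝ => ∫ v in M..VF, ρ' v) atBot
        (nhds (∫ v in Iic VF, ρ' v)) :=
      intervalIntegral_tendsto_integral_Iic VF hρ'int tendsto_id
    have hftc2 : (∫ v in VR..VF, ρ' v) = ρ VF - ρ VR := by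
      apply intervalIntegral.integral_eq_sub_of_hasDeriv_right_of_le hV.le
      · exact S.rho_cont.mono (fun z hz => hz.2)
      · intro x hx
        exact (((S.rho'_def x (Or.inr hx)).hasDerivAt
          (Iic_mem_nhds hx.2)).hasDerivWithinAt)
      · exact (intervalIntegrable_iff_integrableOn_Icc_of_le hV.le).2
          (hρ'int.mono_set (fun z hz => hz.2))
    have hev : (fun M : ℝ => ∫ v in M..VF, ρ' v) =ᶠ[atBot] fun M => -ρ M := by
      filter_upwards [eventually_lt_atBot VR] with M hM
      have hftc1 : (∫ v in M..VR, ρ' v) = ρ VR - ρ M := by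
        apply intervalIntegral.integral_eq_sub_of_hasDeriv_right_of_le hM.le
        · exact S.rho_cont.mono (fun z hz => le_trans hz.2 hV.le)
        · intro x hx
          exact (((S.rho'_def x (Or.inl hx.2)).hasDerivAt
            (Iic_mem_nhds (hx.2.trans hV))).hasDerivWithinAt)
        · refine (intervalIntegrable_iff_integrableOn_Icc_of_le hM.le).2
            (hρ'int.mono_set (fun z hz => le_trans hz.2 hV.le))
      have hii1 : IntervalIntegrable ρ' volume M VR :=
        (intervalIntegrable_iff_integrableOn_Icc_of_le hM.le).2
          (hρ'int.mono_set (fun z hz => le_trans hz.2 hV.le))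
      have hii2 : IntervalIntegrable ρ' volume VR VF :=
        (intervalIntegrable_iff_integrableOn_Icc_of_le hV.le).2
          (hρ'int.mono_set (fun z hz => hz.2))
      have hVF0 : ρ VF = 0 := S.rho_VF
      rw [← intervalIntegral.integral_add_adjacent_intervals hii1 hii2, hftc1, hftc2,
        hVF0]
      ring
    have hlim2 : Tendsto (fun M : ℝ => -ρ M) atBot (nhds 0) := by
      simpa using S.rho_bot.neg
    exact tendsto_nhds_unique (htend.congr' hev) (by simpa using hlim2)
  -- final assembly
  have haekey : ∀ᵐ v ∂(volume.restrict (Iic VF)),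
      v * ρ v = (b * N) * ρ v - g v - a * ρ' v := by
    filter_upwards [haeJ] with v hv
    have : (-v + b * N) * ρ v - a * ρ' v = g v := hv
    linarith [this]
  have hrhs_int : IntegrableOn (fun v => (b * N) * ρ v - g v - a * ρ' v) (Iic VF) :=
    ((S.rho_int.const_mul (b * N)).sub hgint).sub (hρ'int.const_mul a)
  calc (∫ v in Iic VF, v * ρ v)
      = ∫ v in Iic VF, ((b * N) * ρ v - g v - a * ρ' v) := integral_congr_ae haekey
    _ = (∫ v in Iic VF, (b * N) * ρ v) - (∫ v in Iic VF, g v)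
        - (∫ v in Iic VF, a * ρ' v) := by
        have hA : IntegrableOn (fun v => (b * N) * ρ v) (Iic VF) :=
          S.rho_int.const_mul (b * N)
        have hB : IntegrableOn (fun v => (b * N) * ρ v - g v) (Iic VF) :=
          IntegrableOn.congr_fun (hA.sub hgint) (fun v _ => rfl) measurableSet_Iic
        have hC : IntegrableOn (fun v => a * ρ' v) (Iic VF) := hρ'int.const_mul a
        rw [integral_sub hB hC, integral_sub hA hgint]
    _ = (b * N) * 1 - N * (VF - VR) - a * 0 := by
        rw [integral_const_mul, integral_const_mul, S.rho_mass, hgval, hρ'zero]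
    _ = (b - (VF - VR)) * N := by ring
end

section
/- Let sigma > 0, I0 ≥ 0 and let s : [0,sigma] -> R satisfy |s(tau) - s(eta)| ≤ I0 (tau - eta) for all 0 ≤ eta ≤ tau ≤ sigma. Then for every tau in (0,sigma]: ∫_0^tau |∂_x G(s(tau),tau,s(eta),eta)| d eta ≤ I0 sqrt(tau) / (2 sqrt(pi)). -/
open Real Set Filter MeasureTheory Topology

/-- The one-dimensional heat kernel `G(x, τ, ξ, η)`. -/
noncomputable def heatG (x τ ξ η : ℝ) : ℝ :=
  Real.exp (-(x - ξ) ^ 2 / (4 * (τ - η))) / Real.sqrt (4 * Real.pi * (τ - η))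

/-- The partial derivative `∂ₓ G` of the heat kernel in its first argument. -/
noncomputable def heatGx (x τ ξ η : ℝ) : ℝ :=
  -((x - ξ) / (2 * (τ - η))) * heatG x τ ξ η

/-- The rescaling factor `α(τ) = (2τ+1)^{-1/2}`. -/
noncomputable def alphafun (τ : ℝ) : ℝ := (Real.sqrt (2 * τ + 1))⁻¹

/-- estimate on the time integral of `|∂ₓ G|` along a Lipschitz
free boundary. -/
theorem stmt19 (σ I0 : ℝ) (hσ : 0 < σ) (hI0 : 0 ≤ I0)
    (s : ℝ → ℝ)
    (hs : ∀ η τ : ℝ, 0 ≤ η → η ≤ τ → τ ≤ σ → |s τ - s η| ≤ I0 * (τ - η)) :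
    ∀ τ ∈ Ioc (0:ℝ) σ,
      (∫ η in (0:ℝ)..τ, |heatGx (s τ) τ (s η) η|) ≤
        I0 * Real.sqrt τ / (2 * Real.sqrt Real.pi) := by
  intro τ hτ
  obtain ⟨hτ0, hτσ⟩ := hτ
  have hπ : (0:ℝ) < Real.sqrt Real.pi := Real.sqrt_pos.mpr Real.pi_pos
  set g : ℝ → ℝ := fun η => I0 / (4 * Real.sqrt Real.pi) * (τ - η) ^ (-(1/2) : ℝ) with hg
  have hgint : IntervalIntegrable g volume 0 τ := by
    apply IntervalIntegrable.const_mul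
    have h := (intervalIntegral.intervalIntegrable_rpow' (a := 0) (b := τ)
      (r := -(1/2)) (by norm_num)).comp_sub_left τ
    simpa using h.symm
  have hbound : ∀ η ∈ Icc (0:ℝ) τ, |heatGx (s τ) τ (s η) η| ≤ g η := by
    rintro η ⟨hη0, hητ⟩
    rcases eq_or_lt_of_le hητ with rfl | hlt
    · simp [heatGx, heatG, hg]
    · have hd : (0:ℝ) < τ - η := by linarith
      have hsd : (0:ℝ) < Real.sqrt (τ - η) := Real.sqrt_pos.mpr hd
      have hxi : |s τ - s η| ≤ I0 * (τ - η) := hs η τ hη0 hητ hτσ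
      have hG0 : 0 ≤ heatG (s τ) τ (s η) η := by
        unfold heatG
        positivity
      have hGle : heatG (s τ) τ (s η) η ≤ 1 / (2 * Real.sqrt Real.pi * Real.sqrt (τ - η)) := by
        unfold heatG
        have hs4 : Real.sqrt (4 * Real.pi * (τ - η)) = 2 * Real.sqrt Real.pi * Real.sqrt (τ - η) := by
          rw [show (4:ℝ) * Real.pi * (τ - η) = 4 * (Real.pi * (τ - η)) by ring,
            Real.sqrt_mul (by norm_num), Real.sqrt_mul Real.pi_pos.le,
            show (4:ℝ) = 2^2 by norm_num, Real.sqrt_sq (by norm_num)]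
          ring
        rw [hs4]
        gcongr
        exact Real.exp_le_one_iff.mpr (div_nonpos_of_nonpos_of_nonneg (neg_nonpos.mpr (by positivity)) (by positivity))
      have habs : |heatGx (s τ) τ (s η) η| =
          |s τ - s η| / (2 * (τ - η)) * heatG (s τ) τ (s η) η := by
        unfold heatGx
        rw [abs_mul, abs_neg, abs_div, abs_of_nonneg hG0, abs_of_pos (by positivity : (0:ℝ) < 2*(τ-η))]
      rw [habs]
      have h1 : |s τ - s η| / (2 * (τ - η)) ≤ I0 / 2 := by
        rw [div_le_div_iff₀ (by positivity) (by norm_num)]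
        nlinarith
      calc |s τ - s η| / (2 * (τ - η)) * heatG (s τ) τ (s η) η
          ≤ (I0 / 2) * (1 / (2 * Real.sqrt Real.pi * Real.sqrt (τ - η))) := by
            apply mul_le_mul h1 hGle hG0 (by positivity)
        _ = g η := by
            rw [hg]
            simp only
            rw [Real.rpow_neg hd.le, ← Real.sqrt_eq_rpow]
            field_simp
            ring_nf
            try tauto
  have hgval : (∫ η in (0:ℝ)..τ, g η) = I0 * Real.sqrt τ / (2 * Real.sqrt Real.pi) := by
    rw [hg]
    simp only
    rw [intervalIntegral.integral_const_mul]
    have hc : (∫ η in (0:ℝ)..τ, (τ - η) ^ (-(1/2):ℝ)) = 2 * Real.sqrt τ := by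
      have h1 := intervalIntegral.integral_comp_sub_left (a := (0:ℝ)) (b := τ)
        (fun x => x ^ (-(1/2):ℝ)) τ
      simp only [sub_zero, sub_self] at h1
      rw [h1, integral_rpow (Or.inl (by norm_num)),
        Real.zero_rpow (by norm_num : (-(1/2):ℝ)+1 ≠ 0), Real.sqrt_eq_rpow]
      norm_num
      ring
    rw [hc]
    field_simp
    ring
  by_cases hint : IntervalIntegrable (fun η => |heatGx (s τ) τ (s η) η|) volume 0 τ
  · calc (∫ η in (0:ℝ)..τ, |heatGx (s τ) τ (s η) η|) ≤ ∫ η in (0:ℝ)..τ, g η :=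
        intervalIntegral.integral_mono_on hτ0.le hint hgint hbound
      _ = _ := hgval
  · rw [intervalIntegral.integral_undef hint]
    positivity
end
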